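/- Let p be a prime and n ≥ 1, and suppose that p does not divide Φ_ℓ(1) for every integer ℓ ≥ 2 with deg(Φ_ℓ) = φ(ℓ) ≤ n. If g ∈ GL_n(ℤ) satisfies g ≡ I (mod p), then every eigenvalue of g (in ℂ) which is a root of unity equals 1. (This is the eigenvalue form of Borel's criterion that the principal congruence subgroup Γ(p) ⊆ GL_n(ℤ) is neat.) -/
import Mathlib

open Polynomial

/-- charpoly of the identity matrix is `(X - 1) ^ n`. -/
lemma charpoly_one_eq {R : Type*} [CommRing R] (m : ℕ) :
    (1 : Matrix (Fin m) (Fin m) R).charpoly = (X - 1) ^ m := by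
  have h1 : Matrix.charmatrix (1 : Matrix (Fin m) (Fin m) R)
      = Matrix.diagonal (fun _ => (X - 1 : R[X])) := by
    ext i j
    by_cases h : i = j
    · subst h
      simp [Matrix.charmatrix_apply_eq, Matrix.diagonal_apply_eq]
    · simp [Matrix.charmatrix_apply_ne _ _ _ h, Matrix.diagonal_apply_ne _ h,
        Matrix.one_apply_ne h]
  rw [Matrix.charpoly, h1, Matrix.det_diagonal]
  simp

/-- Borel's neatness criterion in eigenvalue form: if the prime `p` does not divide
`Φ_ℓ(1)` for every `ℓ ≥ 2` with `deg Φ_ℓ = φ(ℓ) ≤ n`, and `g ∈ GL_n(ℤ)` satisfies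
`g ≡ I (mod p)`, then every eigenvalue of `g` in `ℂ` which is a root of unity equals `1`. -/
theorem stmt11 (p : ℕ) (hp : p.Prime) (n : ℕ) (hn : 1 ≤ n)
    (hΦ : ∀ ℓ : ℕ, 2 ≤ ℓ → ℓ.totient ≤ n →
      ¬ ((p : ℤ) ∣ (Polynomial.cyclotomic ℓ ℤ).eval 1))
    (g : GL (Fin n) ℤ)
    (hg : ∀ i j : Fin n, (p : ℤ) ∣ ((g : Matrix (Fin n) (Fin n) ℤ) i j -
      (1 : Matrix (Fin n) (Fin n) ℤ) i j))
    (z : ℂ)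
    (hz : (((g : Matrix (Fin n) (Fin n) ℤ).map (fun x : ℤ => (x : ℂ))).charpoly).IsRoot z)
    (hroot : ∃ k : ℕ, 0 < k ∧ z ^ k = 1) :
    z = 1 := by
  obtain ⟨k, hk, hzk⟩ := hroot
  set M : Matrix (Fin n) (Fin n) ℤ := (g : Matrix (Fin n) (Fin n) ℤ) with hM
  -- z is a root of the integer charpoly (mapped to ℂ)
  have hmap : (M.map (fun x : ℤ => (x : ℂ))).charpoly = M.charpoly.map (Int.castRingHom ℂ) := by
    exact Matrix.charpoly_map M (Int.castRingHom ℂ)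
  have haev : (aeval z) M.charpoly = 0 := by
    rw [aeval_def, eval₂_eq_eval_map]
    have := hz
    rw [hmap] at this
    exact this
  -- z has finite order; let ℓ be its order
  have hfin : IsOfFinOrder z := isOfFinOrder_iff_pow_eq_one.2 ⟨k, hk, hzk⟩
  set ℓ := orderOf z with hℓ
  have hℓpos : 0 < ℓ := hfin.orderOf_pos
  have hprim : IsPrimitiveRoot z ℓ := IsPrimitiveRoot.orderOf z
  by_contra hne
  have hℓ2 : 2 ≤ ℓ := by
    rcases Nat.lt_or_ge ℓ 2 with h | h
    · have h1 : ℓ = 1 := by omega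
      have h2 : z ^ ℓ = 1 := hprim.pow_eq_one
      rw [h1, pow_one] at h2
      exact absurd h2 hne
    · exact h
  -- cyclotomic ℓ ℤ divides the charpoly
  have hint : IsIntegral ℤ z := hprim.isIntegral hℓpos
  have hmin : cyclotomic ℓ ℤ = minpoly ℤ z := cyclotomic_eq_minpoly hprim hℓpos
  have hdvd : cyclotomic ℓ ℤ ∣ M.charpoly := by
    rw [hmin]
    exact minpoly.isIntegrallyClosed_dvd hint haev
  -- degree considerations
  have hdeg : M.charpoly.natDegree = n := by
    simpa using M.charpoly_natDegree_eq_dim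
  have hcne : M.charpoly ≠ 0 := M.charpoly_monic.ne_zero
  have htot : ℓ.totient ≤ n := by
    have := Polynomial.natDegree_le_of_dvd hdvd hcne
    rwa [natDegree_cyclotomic, hdeg] at this
  -- reduce mod p
  haveI : Fact p.Prime := ⟨hp⟩
  have hred : M.charpoly.map (Int.castRingHom (ZMod p)) = (X - 1) ^ n := by
    rw [← Matrix.charpoly_map M (Int.castRingHom (ZMod p))]
    have hMone : M.map (Int.castRingHom (ZMod p)) = 1 := by
      ext i j
      have := hg i j
      have h0 : ((M i j - (1 : Matrix (Fin n) (Fin n) ℤ) i j : ℤ) : ZMod p) = 0 := by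
        rwa [ZMod.intCast_zmod_eq_zero_iff_dvd]
      push_cast at h0
      have : ((M i j : ℤ) : ZMod p) = ((1 : Matrix (Fin n) (Fin n) ℤ) i j : ZMod p) := by
        linear_combination h0
      simpa [Matrix.map_apply, Matrix.one_apply] using this.trans (by
        by_cases h : i = j <;> simp [Matrix.one_apply, h])
    rw [hMone, charpoly_one_eq]
  -- cyclotomic mod p divides (X-1)^n
  have hdvd2 : (cyclotomic ℓ ℤ).map (Int.castRingHom (ZMod p)) ∣ (X - 1) ^ n := by
    rw [← hred]
    exact Polynomial.map_dvd _ hdvd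
  rw [map_cyclotomic] at hdvd2
  -- X - 1 is prime in (ZMod p)[X]
  have hXprime : Prime (X - 1 : (ZMod p)[X]) := by
    have : (X - 1 : (ZMod p)[X]) = X - C 1 := by simp
    rw [this]
    exact Polynomial.prime_X_sub_C 1
  obtain ⟨m, hmle, hassoc⟩ := (dvd_prime_pow hXprime n).1 hdvd2
  -- m ≥ 1 since cyclotomic has positive degree
  have hdegc : (cyclotomic ℓ (ZMod p)).natDegree = ℓ.totient := natDegree_cyclotomic ℓ (ZMod p)
  have hm1 : 1 ≤ m := by
    by_contra hm
    push_neg at hm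
    have hm0 : m = 0 := by omega
    rw [hm0, pow_zero] at hassoc
    have : IsUnit (cyclotomic ℓ (ZMod p)) := hassoc.symm.isUnit isUnit_one
    have hdeg0 : (cyclotomic ℓ (ZMod p)).natDegree = 0 := natDegree_eq_zero_of_isUnit this
    rw [hdegc] at hdeg0
    have : 1 ≤ ℓ.totient := Nat.totient_pos.2 hℓpos
    omega
  -- evaluate at 1
  have hXd : (X - 1 : (ZMod p)[X]) ∣ cyclotomic ℓ (ZMod p) :=
    dvd_trans (dvd_pow_self _ (by omega : m ≠ 0)) hassoc.symm.dvd
  have heval : (cyclotomic ℓ (ZMod p)).eval 1 = 0 := by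
    obtain ⟨q, hq⟩ := hXd
    rw [hq]
    simp
  -- conclude
  have : (p : ℤ) ∣ (cyclotomic ℓ ℤ).eval 1 := by
    rw [← ZMod.intCast_zmod_eq_zero_iff_dvd]
    have h2 : (cyclotomic ℓ (ZMod p)).eval 1 = (((cyclotomic ℓ ℤ).eval 1 : ℤ) : ZMod p) := by
      rw [← map_cyclotomic ℓ (Int.castRingHom (ZMod p)), eval_map, eval₂_at_one]
      simp
    rw [h2] at heval
    exact heval
  exact hΦ ℓ hℓ2 htot this
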